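/- Let K : I → (0,∞) be 𝓘-measurable and suppose the family Ψ = {Ψ_i, i ∈ I} with Ψ_i(p̄) = K_i p̄^{(1+β)/(1−α_i)} belongs to ℬ. Assume ᾱ := ι-ess sup α ∈ (0,1) and set ψ := ℐ[Ψ]. Then lim_{p̄↑∞} (ln ψ(p̄)) / (ln p̄) = −ᾱ(1+β)γ/(1−ᾱ), and lim_{p̄↑∞} (ln(−ψ′₋(p̄))) / (ln p̄) = −ᾱ(1+β)γ/(1−ᾱ) − 1. -/

import Mathlib

open MeasureTheory Filter Set

/-- The left derivative of a real function. -/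
noncomputable def leftDeriv (f : ℝ → ℝ) (z : ℝ) : ℝ := derivWithin f (Set.Iio z) z

/-- `f` is a difference of two convex functions on `(0, ∞)`. -/
def IsDCC (f : ℝ → ℝ) : Prop :=
  ∃ f₁ f₂ : ℝ → ℝ, ConvexOn ℝ (Set.Ioi (0:ℝ)) f₁ ∧ ConvexOn ℝ (Set.Ioi (0:ℝ)) f₂ ∧
    ∀ x ∈ Set.Ioi (0:ℝ), f x = f₁ x - f₂ x

/-- Membership in the class ℬ of families of expansion functions. -/
def MemB {I : Type*} [MeasurableSpace I] (ι : Measure I) (α lam : I → ℝ)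
    (𝒳 : I → ℝ → ℝ) : Prop :=
  Measurable (fun p : ℝ × I => 𝒳 p.2 p.1) ∧
  (∀ z > (0:ℝ), Integrable (fun i => lam i * (𝒳 i z) ^ (α i)) ι) ∧
  ∀ i, (∀ z > (0:ℝ), 0 < 𝒳 i z) ∧ IsDCC (𝒳 i) ∧
    Tendsto (𝒳 i) (nhdsWithin (0:ℝ) (Set.Ioi (0:ℝ))) (nhds 0) ∧
    Tendsto (𝒳 i) atTop atTop ∧
    ∀ z > (0:ℝ), 0 < leftDeriv (𝒳 i) z

/-- The operator ℐ applied to a family 𝒳 ∈ ℬ: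
`ℐ[𝒳](z) = ((1+β) ∫ λᵢ max(cᵢ^{αᵢ}, 𝒳ᵢ(z)^{αᵢ}) ι(di))^{-γ}`. -/
noncomputable def Iop {I : Type*} [MeasurableSpace I] (ι : Measure I) (β γ : ℝ)
    (c α lam : I → ℝ) (𝒳 : I → ℝ → ℝ) (z : ℝ) : ℝ :=
  ((1 + β) * ∫ i, lam i * max ((c i) ^ (α i)) ((𝒳 i z) ^ (α i)) ∂ι) ^ (-γ)

namespace St7Aux

lemma tendsto_of_bounds (u : ℝ → ℝ) (θ : ℝ)
    (hlo : ∀ δ > (0:ℝ), ∀ᶠ t in atTop, θ - δ ≤ u t)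
    (hhi : ∀ δ > (0:ℝ), ∀ᶠ t in atTop, u t ≤ θ + δ) :
    Tendsto u atTop (nhds θ) := by
  refine tendsto_order.2 ⟨fun l hl => ?_, fun m hm => ?_⟩
  · filter_upwards [hlo ((θ - l) / 2) (by linarith)] with t ht
    linarith
  · filter_upwards [hhi ((m - θ) / 2) (by linarith)] with t ht
    linarith

lemma convex_hasLeftDeriv {G : ℝ → ℝ} (hG : ConvexOn ℝ univ G) (t : ℝ) :
    HasDerivWithinAt G (sSup (slope G t '' Iio t)) (Iio t) t := by
  have hmono : MonotoneOn (slope G t) (Iio t) := by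
    intro x hx y hy hxy
    rw [slope_def_field, slope_def_field]
    exact hG.secant_mono (mem_univ t) (mem_univ x) (mem_univ y)
      (ne_of_lt hx) (ne_of_lt hy) hxy
  have hbdd : BddAbove (slope G t '' Iio t) := by
    refine ⟨slope G t (t + 1), ?_⟩
    rintro _ ⟨y, hy, rfl⟩
    rw [slope_def_field, slope_def_field]
    exact hG.secant_mono (mem_univ t) (mem_univ y) (mem_univ (t+1))
      (ne_of_lt hy) (by norm_num) (by linarith [mem_Iio.mp hy])
  have := hmono.tendsto_nhdsLT hbdd
  rw [hasDerivWithinAt_iff_tendsto_slope]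
  rwa [diff_singleton_eq_self (fun h => lt_irrefl t (mem_Iio.mp h))]

lemma convex_hasLeftDeriv' {G : ℝ → ℝ} (hG : ConvexOn ℝ univ G) (t : ℝ) :
    HasDerivWithinAt G (leftDeriv G t) (Iio t) t := by
  have h := convex_hasLeftDeriv hG t
  have heq : leftDeriv G t = sSup (slope G t '' Iio t) :=
    h.derivWithin (uniqueDiffWithinAt_Iio t)
  rw [heq]; exact h

lemma convex_slope_le_leftDeriv {G : ℝ → ℝ} (hG : ConvexOn ℝ univ G) {y t : ℝ} (h : y < t) :
    (G t - G y) / (t - y) ≤ leftDeriv G t := by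
  have hl := convex_hasLeftDeriv hG t
  have heq : leftDeriv G t = sSup (slope G t '' Iio t) :=
    hl.derivWithin (uniqueDiffWithinAt_Iio t)
  rw [heq]
  have hbdd : BddAbove (slope G t '' Iio t) := by
    refine ⟨slope G t (t + 1), ?_⟩
    rintro _ ⟨z, hz, rfl⟩
    rw [slope_def_field, slope_def_field]
    exact hG.secant_mono (mem_univ t) (mem_univ z) (mem_univ (t+1))
      (ne_of_lt hz) (by norm_num) (by linarith [mem_Iio.mp hz])
  have hy : slope G t y ∈ slope G t '' Iio t := mem_image_of_mem _ (mem_Iio.mpr h)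
  have hle := le_csSup hbdd hy
  rw [slope_def_field] at hle
  have heq2 : (G y - G t) / (y - t) = (G t - G y) / (t - y) := by
    rw [← neg_div_neg_eq]; ring_nf
  rw [heq2] at hle; exact hle

lemma convex_leftDeriv_le_slope {G : ℝ → ℝ} (hG : ConvexOn ℝ univ G) {t z : ℝ} (h : t < z) :
    leftDeriv G t ≤ (G z - G t) / (z - t) := by
  have hl := convex_hasLeftDeriv hG t
  have heq : leftDeriv G t = sSup (slope G t '' Iio t) :=
    hl.derivWithin (uniqueDiffWithinAt_Iio t)
  rw [heq]
  refine csSup_le ⟨slope G t (t - 1), mem_image_of_mem _ (mem_Iio.mpr (by linarith))⟩ ?_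
  rintro _ ⟨y, hy, rfl⟩
  rw [slope_def_field]
  exact hG.secant_mono (mem_univ t) (mem_univ y) (mem_univ z)
    (ne_of_lt hy) (ne_of_gt h) (by linarith [mem_Iio.mp hy])

lemma ratio_mono {β : ℝ} (hβ : 0 < β) {a b : ℝ} (ha : 0 < a) (hab : a ≤ b) (hb : b < 1) :
    (1 + β) / (1 - a) * a ≤ (1 + β) / (1 - b) * b := by
  rw [div_mul_eq_mul_div, div_mul_eq_mul_div, div_le_div_iff₀ (by linarith) (by linarith)]
  nlinarith

end St7Aux

open St7Aux

set_option maxHeartbeats 2000000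

/-- Let Ψᵢ(p̄) = Kᵢ p̄^{(1+β)/(1−αᵢ)} define a family Ψ ∈ ℬ and suppose
ᾱ := ι-ess sup α ∈ (0,1).  With ψ := ℐ[Ψ], one has
lim_{p̄→∞} ln ψ(p̄)/ln p̄ = −ᾱ(1+β)γ/(1−ᾱ) and
lim_{p̄→∞} ln(−ψ′₋(p̄))/ln p̄ = −ᾱ(1+β)γ/(1−ᾱ) − 1. -/
theorem statement7
    {I : Type*} [MeasurableSpace I] (ι : Measure I) [SigmaFinite ι]
    (β γ : ℝ) (hβ : 0 < β) (hγ : γ ∈ Set.Ioo (0:ℝ) 1)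
    (c α lam : I → ℝ) (hcm : Measurable c) (hαm : Measurable α) (hlamm : Measurable lam)
    (hcpos : ∀ i, 0 < c i) (hαmem : ∀ i, α i ∈ Set.Ioo (0:ℝ) 1) (hlampos : ∀ i, 0 < lam i)
    (hκint : Integrable (fun i => lam i * (c i) ^ (α i)) ι)
    (hκpos : 0 < ∫ i, lam i * (c i) ^ (α i) ∂ι)
    (K : I → ℝ) (hKm : Measurable K) (hKpos : ∀ i, 0 < K i)
    (Ψ : I → ℝ → ℝ)
    (hΨdef : ∀ i, ∀ p > (0:ℝ), Ψ i p = K i * p ^ ((1 + β) / (1 - α i)))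
    (hΨ : MemB ι α lam Ψ)
    (abar : ℝ)
    (habar : abar = sInf {a : ℝ | a ∈ Set.Ioc (0:ℝ) 1 ∧ ι {i | a < α i} = 0})
    (habar01 : abar ∈ Set.Ioo (0:ℝ) 1) :
    Tendsto (fun p => Real.log (Iop ι β γ c α lam Ψ p) / Real.log p) atTop
      (nhds (-(abar * (1 + β) * γ / (1 - abar)))) ∧
    Tendsto (fun p => Real.log (-(leftDeriv (Iop ι β γ c α lam Ψ) p)) / Real.log p) atTop
      (nhds (-(abar * (1 + β) * γ / (1 - abar)) - 1)) := by
  have hΨint : ∀ z > (0:ℝ), Integrable (fun i => lam i * (Ψ i z) ^ (α i)) ι := hΨ.2.1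
  obtain ⟨hγ0, hγ1⟩ := hγ
  obtain ⟨habar0, habar1⟩ := habar01
  have hβ1 : (0:ℝ) < 1 + β := by linarith
  set A : Set ℝ := {a : ℝ | a ∈ Set.Ioc (0:ℝ) 1 ∧ ι {i | a < α i} = 0} with hA
  set s : I → ℝ := fun i => (1 + β) / (1 - α i) * α i with hs
  set G : ℝ → ℝ :=
    fun t => ∫ i, lam i * max ((c i) ^ (α i)) ((K i) ^ (α i) * Real.exp (s i * t)) ∂ι with hG
  set θ : ℝ := (1 + β) / (1 - abar) * abar with hθ
  have hθpos : 0 < θ :=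
    mul_pos (div_pos hβ1 (by linarith)) habar0
  -- pointwise identity
  have hpoint : ∀ i, ∀ p > (0:ℝ),
      (Ψ i p) ^ (α i) = (K i) ^ (α i) * Real.exp (s i * Real.log p) := by
    intro i p hp
    rw [hΨdef i p hp, Real.mul_rpow (hKpos i).le (Real.rpow_nonneg hp.le _)]
    congr 1
    rw [← Real.rpow_mul hp.le, Real.rpow_def_of_pos hp]
    congr 1
    simp only [hs]; ring
  -- integrability
  have hmax_eq : ∀ (t : ℝ) i, lam i * max ((c i) ^ (α i)) ((K i) ^ (α i) * Real.exp (s i * t))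
      = max (lam i * (c i) ^ (α i)) (lam i * (Ψ i (Real.exp t)) ^ (α i)) := by
    intro t i
    rw [hpoint i _ (Real.exp_pos t), Real.log_exp]
    exact mul_max_of_nonneg _ _ (hlampos i).le
  have hK1 : Integrable (fun i => lam i * (K i) ^ (α i)) ι := by
    refine (hΨint 1 one_pos).congr (ae_of_all _ fun i => ?_)
    show lam i * (Ψ i 1) ^ (α i) = lam i * (K i) ^ (α i)
    rw [hΨdef i 1 one_pos, Real.one_rpow, mul_one]
  have hInt : ∀ t : ℝ, Integrable
      (fun i => lam i * max ((c i) ^ (α i)) ((K i) ^ (α i) * Real.exp (s i * t))) ι := by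
    intro t
    refine (hκint.sup (hΨint (Real.exp t) (Real.exp_pos t))).congr (ae_of_all _ fun i => ?_)
    simp only [Pi.sup_apply]
    rw [hmax_eq t i]
  have hnn : ∀ (t : ℝ) i,
      0 ≤ lam i * max ((c i) ^ (α i)) ((K i) ^ (α i) * Real.exp (s i * t)) := by
    intro t i
    have h1 : (0:ℝ) ≤ (c i) ^ (α i) := Real.rpow_nonneg (hcpos i).le _
    exact mul_nonneg (hlampos i).le (le_trans h1 (le_max_left _ _))
  have hGnn : ∀ t, 0 ≤ G t := fun t => integral_nonneg (hnn t)
  -- abar essential bound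
  have hAne : A.Nonempty := by
    by_contra h
    rw [not_nonempty_iff_eq_empty] at h
    rw [h, Real.sInf_empty] at habar
    linarith
  have hAbdd : BddBelow A := ⟨0, fun x hx => hx.1.1.le⟩
  have hmeas0 : ι {i | abar < α i} = 0 := by
    have hsub : {i | abar < α i} ⊆ ⋃ n : ℕ, {i | abar + 1 / (n + 1) < α i} := by
      intro i hi
      obtain ⟨n, hn⟩ := exists_nat_one_div_lt (sub_pos.mpr (mem_setOf.mp hi))
      exact mem_iUnion.mpr ⟨n, by simp only [mem_setOf]; linarith⟩
    refine measure_mono_null hsub (measure_iUnion_null fun n => ?_)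
    have hlt : sInf A < abar + 1 / (n + 1) := by
      rw [← habar]; have : (0:ℝ) < 1 / (n+1) := by positivity
      linarith
    obtain ⟨a, haA, halt⟩ := exists_lt_of_csInf_lt hAne hlt
    refine measure_mono_null (fun i hi => ?_) haA.2
    exact lt_trans halt (mem_setOf.mp hi)
  have habar_ae : ∀ᵐ i ∂ι, α i ≤ abar := by
    rw [ae_iff]
    convert hmeas0 using 2
    ext i; simp [not_le]
  have hs_le : ∀ i, α i ≤ abar → s i ≤ θ := by
    intro i hi
    show (1 + β) / (1 - α i) * α i ≤ (1 + β) / (1 - abar) * abar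
    rw [div_mul_eq_mul_div, div_mul_eq_mul_div,
      div_le_div_iff₀ (by linarith [(hαmem i).2]) (by linarith)]
    nlinarith [(hαmem i).1]
  -- constants
  set C₀ : ℝ := ∫ i, lam i * (c i) ^ (α i) ∂ι with hC₀
  set C₁ : ℝ := ∫ i, lam i * (K i) ^ (α i) ∂ι with hC₁
  have hC₁nn : 0 ≤ C₁ :=
    integral_nonneg fun i => mul_nonneg (hlampos i).le (Real.rpow_nonneg (hKpos i).le _)
  -- upper bound
  have hub : ∀ t ≥ (0:ℝ), G t ≤ C₀ + C₁ * Real.exp (θ * t) := by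
    intro t ht
    have hle : (fun i => lam i * max ((c i) ^ (α i)) ((K i) ^ (α i) * Real.exp (s i * t)))
        ≤ᵐ[ι] fun i => lam i * (c i) ^ (α i) + (lam i * (K i) ^ (α i)) * Real.exp (θ * t) := by
      filter_upwards [habar_ae] with i hi
      have hsθ := hs_le i hi
      have hcnn : (0:ℝ) ≤ (c i) ^ (α i) := Real.rpow_nonneg (hcpos i).le _
      have hKnn : (0:ℝ) ≤ (K i) ^ (α i) := Real.rpow_nonneg (hKpos i).le _
      have h2 : (K i) ^ (α i) * Real.exp (s i * t) ≤ (K i) ^ (α i) * Real.exp (θ * t) :=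
        mul_le_mul_of_nonneg_left
          (Real.exp_le_exp.mpr (mul_le_mul_of_nonneg_right hsθ ht)) hKnn
      have hmax : max ((c i) ^ (α i)) ((K i) ^ (α i) * Real.exp (s i * t))
          ≤ (c i) ^ (α i) + (K i) ^ (α i) * Real.exp (θ * t) := by
        refine max_le (le_add_of_nonneg_right (by positivity)) (h2.trans ?_)
        exact le_add_of_nonneg_left hcnn
      calc lam i * max ((c i) ^ (α i)) ((K i) ^ (α i) * Real.exp (s i * t))
          ≤ lam i * ((c i) ^ (α i) + (K i) ^ (α i) * Real.exp (θ * t)) :=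
            mul_le_mul_of_nonneg_left hmax (hlampos i).le
        _ = lam i * (c i) ^ (α i) + (lam i * (K i) ^ (α i)) * Real.exp (θ * t) := by ring
    have h := integral_mono_ae (hInt t) (hκint.add (hK1.mul_const _)) hle
    simp only [Pi.add_apply] at h
    rwa [integral_add hκint (hK1.mul_const _), integral_mul_const] at h

  -- lower bound
  have hlb : ∀ a', 0 < a' → a' < abar → ∃ ε > (0:ℝ), ∀ t ≥ (0:ℝ),
      ε * Real.exp (((1 + β) / (1 - a') * a') * t) ≤ G t := by
    intro a' ha'0 ha'lt
    have hne : ι {i | a' < α i} ≠ 0 := by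
      intro h0
      have hmem : a' ∈ A := ⟨⟨ha'0, by linarith⟩, h0⟩
      have hle := csInf_le hAbdd hmem
      rw [← habar] at hle; linarith
    have hcover : {i | a' < α i} ⊆
        ⋃ n : ℕ, {i | a' < α i} ∩ ({i | 1/(n+1:ℝ) ≤ lam i} ∩ {i | 1/(n+1:ℝ) ≤ K i}) := by
      intro i hi
      obtain ⟨n, hn⟩ := exists_nat_one_div_lt (lt_min (hlampos i) (hKpos i))
      exact mem_iUnion.mpr ⟨n, hi, le_trans hn.le (min_le_left _ _),
        le_trans hn.le (min_le_right _ _)⟩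
    obtain ⟨n, hn⟩ : ∃ n : ℕ,
        ι ({i | a' < α i} ∩ ({i | 1/(n+1:ℝ) ≤ lam i} ∩ {i | 1/(n+1:ℝ) ≤ K i})) ≠ 0 := by
      by_contra h
      push_neg at h
      exact hne (le_antisymm
        (le_trans (measure_mono hcover) (le_of_eq (measure_iUnion_null h))) zero_le)
    have hTm : MeasurableSet ({i | a' < α i} ∩ ({i | 1/(n+1:ℝ) ≤ lam i} ∩ {i | 1/(n+1:ℝ) ≤ K i})) :=
      (hαm measurableSet_Ioi).inter ((hlamm measurableSet_Ici).inter (hKm measurableSet_Ici))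
    obtain ⟨S, hSm, hSsub, hSpos, hSfin⟩ :=
      MeasureTheory.Measure.exists_subset_measure_lt_top hTm (pos_iff_ne_zero.mpr hn)
    have htoR : 0 < (ι S).toReal := ENNReal.toReal_pos hSpos.ne' hSfin.ne
    set ε₁ : ℝ := 1/(n+1:ℝ) with hε₁def
    have hε₁ : 0 < ε₁ := by positivity
    have hε₁le1 : ε₁ ≤ 1 := by
      rw [hε₁def]
      rw [div_le_one (by positivity)]
      simp
    refine ⟨ε₁ * ε₁ * (ι S).toReal, by positivity, fun t ht => ?_⟩
    set θ' : ℝ := (1 + β) / (1 - a') * a' with hθ'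
    have hptS : ∀ i ∈ S, ε₁ * ε₁ * Real.exp (θ' * t)
        ≤ lam i * max ((c i) ^ (α i)) ((K i) ^ (α i) * Real.exp (s i * t)) := by
      intro i hi
      obtain ⟨hiα, hilam, hiK⟩ := hSsub hi
      have hiα' : a' < α i := hiα
      have hilam' : ε₁ ≤ lam i := hilam
      have hiK' : ε₁ ≤ K i := hiK
      have hKα : ε₁ ≤ (K i) ^ (α i) := by
        rcases le_total (K i) 1 with hK1' | hK1'
        · calc ε₁ ≤ K i := hiK'
            _ = (K i) ^ (1:ℝ) := (Real.rpow_one _).symm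
            _ ≤ (K i) ^ (α i) :=
              Real.rpow_le_rpow_of_exponent_ge (hKpos i) hK1' (hαmem i).2.le
        · calc ε₁ ≤ 1 := hε₁le1
            _ = (K i) ^ (0:ℝ) := (Real.rpow_zero _).symm
            _ ≤ (K i) ^ (α i) :=
              Real.rpow_le_rpow_of_exponent_le hK1' (hαmem i).1.le
      have hsge : θ' ≤ s i := by
        show (1 + β) / (1 - a') * a' ≤ (1 + β) / (1 - α i) * α i
        rw [div_mul_eq_mul_div, div_mul_eq_mul_div,
          div_le_div_iff₀ (by linarith [(hαmem i).2]) (by linarith [(hαmem i).2])]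
        nlinarith [(hαmem i).2]
      have hexp : Real.exp (θ' * t) ≤ Real.exp (s i * t) :=
        Real.exp_le_exp.mpr (mul_le_mul_of_nonneg_right hsge ht)
      calc ε₁ * ε₁ * Real.exp (θ' * t)
          ≤ lam i * ((K i) ^ (α i) * Real.exp (s i * t)) := by
            have h1 : ε₁ * Real.exp (θ' * t) ≤ (K i) ^ (α i) * Real.exp (s i * t) :=
              mul_le_mul hKα hexp (Real.exp_pos _).le
                (Real.rpow_nonneg (hKpos i).le _)
            calc ε₁ * ε₁ * Real.exp (θ' * t) = ε₁ * (ε₁ * Real.exp (θ' * t)) := by ring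
              _ ≤ lam i * ((K i) ^ (α i) * Real.exp (s i * t)) :=
                mul_le_mul hilam' h1 (by positivity) (hlampos i).le
        _ ≤ lam i * max ((c i) ^ (α i)) ((K i) ^ (α i) * Real.exp (s i * t)) :=
            mul_le_mul_of_nonneg_left (le_max_right _ _) (hlampos i).le
    have h1 : ∫ _ in S, ε₁ * ε₁ * Real.exp (θ' * t) ∂ι
        ≤ ∫ i in S, lam i * max ((c i) ^ (α i)) ((K i) ^ (α i) * Real.exp (s i * t)) ∂ι := by
      refine setIntegral_mono_on ?_ ((hInt t).integrableOn) hSm hptS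
      exact integrableOn_const hSfin.ne
    rw [setIntegral_const, smul_eq_mul] at h1
    have h2 : ∫ i in S, lam i * max ((c i) ^ (α i)) ((K i) ^ (α i) * Real.exp (s i * t)) ∂ι
        ≤ G t := setIntegral_le_integral (hInt t) (ae_of_all _ (hnn t))
    calc ε₁ * ε₁ * (ι S).toReal * Real.exp (θ' * t)
        = (ι S).toReal * (ε₁ * ε₁ * Real.exp (θ' * t)) := by ring
      _ ≤ G t := le_trans h1 h2
  have hGpos : ∀ t ≥ (0:ℝ), 0 < G t := by
    obtain ⟨ε₀, hε₀, h⟩ := hlb (abar/2) (by linarith) (by linarith)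
    exact fun t ht => lt_of_lt_of_le (by positivity) (h t ht)
  -- convexity of G
  have hGconv : ConvexOn ℝ univ G := by
    refine ⟨convex_univ, fun x _ y _ a b ha hb hab => ?_⟩
    have hpc : ∀ i, lam i * max ((c i) ^ (α i)) ((K i) ^ (α i) * Real.exp (s i * (a • x + b • y)))
        ≤ a * (lam i * max ((c i) ^ (α i)) ((K i) ^ (α i) * Real.exp (s i * x)))
          + b * (lam i * max ((c i) ^ (α i)) ((K i) ^ (α i) * Real.exp (s i * y))) := by
      intro i
      have hKnn : (0:ℝ) ≤ (K i) ^ (α i) := Real.rpow_nonneg (hKpos i).le _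
      have hcnn : (0:ℝ) ≤ (c i) ^ (α i) := Real.rpow_nonneg (hcpos i).le _
      have hexpconv : Real.exp (s i * (a • x + b • y))
          ≤ a * Real.exp (s i * x) + b * Real.exp (s i * y) := by
        have h := convexOn_exp.2 (mem_univ (s i * x)) (mem_univ (s i * y)) ha hb hab
        have heq : a • (s i * x) + b • (s i * y) = s i * (a • x + b • y) := by
          simp only [smul_eq_mul]; ring
        rw [heq] at h
        simpa using h
      have hmax : max ((c i) ^ (α i)) ((K i) ^ (α i) * Real.exp (s i * (a • x + b • y)))
          ≤ a * max ((c i) ^ (α i)) ((K i) ^ (α i) * Real.exp (s i * x))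
            + b * max ((c i) ^ (α i)) ((K i) ^ (α i) * Real.exp (s i * y)) := by
        refine max_le ?_ ?_
        · calc (c i) ^ (α i) = a * (c i) ^ (α i) + b * (c i) ^ (α i) := by rw [← add_mul, hab, one_mul]
            _ ≤ a * max ((c i) ^ (α i)) ((K i) ^ (α i) * Real.exp (s i * x))
                + b * max ((c i) ^ (α i)) ((K i) ^ (α i) * Real.exp (s i * y)) :=
              add_le_add (mul_le_mul_of_nonneg_left (le_max_left _ _) ha)
                (mul_le_mul_of_nonneg_left (le_max_left _ _) hb)
        · calc (K i) ^ (α i) * Real.exp (s i * (a • x + b • y))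
              ≤ (K i) ^ (α i) * (a * Real.exp (s i * x) + b * Real.exp (s i * y)) :=
                mul_le_mul_of_nonneg_left hexpconv hKnn
            _ = a * ((K i) ^ (α i) * Real.exp (s i * x))
                + b * ((K i) ^ (α i) * Real.exp (s i * y)) := by ring
            _ ≤ a * max ((c i) ^ (α i)) ((K i) ^ (α i) * Real.exp (s i * x))
                + b * max ((c i) ^ (α i)) ((K i) ^ (α i) * Real.exp (s i * y)) :=
              add_le_add (mul_le_mul_of_nonneg_left (le_max_right _ _) ha)
                (mul_le_mul_of_nonneg_left (le_max_right _ _) hb)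
      calc lam i * max ((c i) ^ (α i)) ((K i) ^ (α i) * Real.exp (s i * (a • x + b • y)))
          ≤ lam i * (a * max ((c i) ^ (α i)) ((K i) ^ (α i) * Real.exp (s i * x))
            + b * max ((c i) ^ (α i)) ((K i) ^ (α i) * Real.exp (s i * y))) :=
            mul_le_mul_of_nonneg_left hmax (hlampos i).le
        _ = a * (lam i * max ((c i) ^ (α i)) ((K i) ^ (α i) * Real.exp (s i * x)))
            + b * (lam i * max ((c i) ^ (α i)) ((K i) ^ (α i) * Real.exp (s i * y))) := by ring
    have hint1 := (hInt x).const_mul a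
    have hint2 := (hInt y).const_mul b
    have hmono := integral_mono (μ := ι) (hInt (a • x + b • y)) (hint1.add hint2) hpc
    calc G (a • x + b • y)
        ≤ ∫ i, (a * (lam i * max ((c i) ^ (α i)) ((K i) ^ (α i) * Real.exp (s i * x)))
          + b * (lam i * max ((c i) ^ (α i)) ((K i) ^ (α i) * Real.exp (s i * y)))) ∂ι := hmono
      _ = a • G x + b • G y := by
          rw [integral_add hint1 hint2, integral_const_mul, integral_const_mul]
          simp only [smul_eq_mul]
          rfl

  -- choose a' near abar
  have hchoose : ∀ δ > (0:ℝ), ∃ a' θ', 0 < a' ∧ a' < abar ∧ θ' = (1 + β) / (1 - a') * a' ∧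
      θ - δ < θ' ∧ θ / 2 < θ' := by
    intro δ hδ
    have h1 : (1:ℝ) - abar ≠ 0 := by linarith
    have hcont : ContinuousAt (fun x : ℝ => (1 + β) / (1 - x) * x) abar :=
      ((continuousAt_const.div (continuousAt_const.sub continuousAt_id) h1).mul continuousAt_id)
    have htt : Tendsto (fun x : ℝ => (1 + β) / (1 - x) * x) (nhdsWithin abar (Iio abar))
        (nhds θ) := by
      rw [hθ]
      exact hcont.tendsto.mono_left nhdsWithin_le_nhds
    have hmaxlt : max (θ - δ) (θ / 2) < θ := max_lt (by linarith) (by linarith)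
    have hev1 := htt.eventually (eventually_gt_nhds hmaxlt)
    have hev2 : ∀ᶠ x in nhdsWithin abar (Iio abar), 0 < x :=
      (eventually_gt_nhds habar0).filter_mono nhdsWithin_le_nhds
    have hev3 : ∀ᶠ x in nhdsWithin abar (Iio abar), x < abar := eventually_mem_nhdsWithin
    obtain ⟨a', h1', h2', h3'⟩ := (hev1.and (hev2.and hev3)).exists
    exact ⟨a', (1 + β) / (1 - a') * a', h2', h3', rfl,
      lt_of_le_of_lt (le_max_left _ _) h1', lt_of_le_of_lt (le_max_right _ _) h1'⟩
  -- limit of log G t / t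
  have hGlo : ∀ δ > (0:ℝ), ∀ᶠ t in atTop, θ - δ ≤ Real.log (G t) / t := by
    intro δ hδ
    obtain ⟨a', θ', ha'0, ha'lt, hθ'eq, hθ'1, hθ'2⟩ := hchoose (δ/2) (by linarith)
    obtain ⟨ε, hε, hεG⟩ := hlb a' ha'0 ha'lt
    rw [← hθ'eq] at hεG
    have hzero : Tendsto (fun t : ℝ => Real.log ε / t) atTop (nhds 0) :=
      tendsto_const_nhds.div_atTop tendsto_id
    filter_upwards [eventually_ge_atTop 1,
      hzero.eventually (eventually_ge_nhds (show -(δ/2) < 0 by linarith))] with t ht1 ht2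
    have htpos : (0:ℝ) < t := by linarith
    have hGt := hεG t (by linarith)
    have hlog : Real.log ε + θ' * t ≤ Real.log (G t) := by
      have h := Real.log_le_log (by positivity) hGt
      rwa [Real.log_mul hε.ne' (Real.exp_pos _).ne', Real.log_exp] at h
    calc θ - δ ≤ θ' - δ/2 := by linarith
      _ ≤ θ' + Real.log ε / t := by linarith
      _ = (Real.log ε + θ' * t) / t := by field_simp; ring
      _ ≤ Real.log (G t) / t := by gcongr
  have hGhi : ∀ δ > (0:ℝ), ∀ᶠ t in atTop, Real.log (G t) / t ≤ θ + δ := by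
    intro δ hδ
    filter_upwards [eventually_ge_atTop 1,
      eventually_ge_atTop (Real.log (C₀ + C₁) / δ)] with t ht1 ht2
    have htpos : (0:ℝ) < t := by linarith
    have hGt : G t ≤ (C₀ + C₁) * Real.exp (θ * t) := by
      have h1 := hub t (by linarith)
      have h2 : (1:ℝ) ≤ Real.exp (θ * t) := Real.one_le_exp (by positivity)
      nlinarith
    have hlog : Real.log (G t) ≤ Real.log (C₀ + C₁) + θ * t := by
      have h := Real.log_le_log (hGpos t (by linarith)) hGt
      rwa [Real.log_mul (by positivity) (Real.exp_pos _).ne', Real.log_exp] at h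
    calc Real.log (G t) / t ≤ (Real.log (C₀ + C₁) + θ * t) / t := by gcongr
      _ = θ + Real.log (C₀ + C₁) / t := by field_simp; ring
      _ ≤ θ + δ := by
          have h3 : Real.log (C₀ + C₁) / t ≤ δ := by
            rw [div_le_iff₀ htpos]
            calc Real.log (C₀ + C₁) ≤ δ * (Real.log (C₀ + C₁) / δ) := by
                  rw [mul_div_cancel₀ _ hδ.ne']
              _ ≤ δ * t := by gcongr
          linarith
  have hGlim : Tendsto (fun t => Real.log (G t) / t) atTop (nhds θ) :=
    St7Aux.tendsto_of_bounds _ _ hGlo hGhi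

  -- left derivative of G
  set g : ℝ → ℝ := fun t => leftDeriv G t with hg
  have hGleft : ∀ t, HasDerivWithinAt G (g t) (Iio t) t :=
    fun t => St7Aux.convex_hasLeftDeriv' hGconv t
  have hglo : ∀ δ > (0:ℝ), ∀ᶠ t in atTop, θ - δ ≤ Real.log (g t) / t ∧ 0 < g t := by
    intro δ hδ
    obtain ⟨a', θ', ha'0, ha'lt, hθ'eq, hθ'1, hθ'2⟩ := hchoose (δ/2) (by linarith)
    obtain ⟨ε, hε, hεG⟩ := hlb a' ha'0 ha'lt
    rw [← hθ'eq] at hεG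
    have hθ'pos : 0 < θ' := lt_trans (by linarith) hθ'2
    have hcpos' : 0 < θ' - θ/2 := by linarith
    -- eventual domination facts
    have he1 : Tendsto (fun t : ℝ => ε/4 * Real.exp (θ' * t)) atTop atTop :=
      (Real.tendsto_exp_atTop.comp (tendsto_id.const_mul_atTop hθ'pos)).const_mul_atTop
        (by positivity)
    have he2 : Tendsto (fun t : ℝ => ε/4 * Real.exp ((θ' - θ/2) * t)) atTop atTop :=
      (Real.tendsto_exp_atTop.comp (tendsto_id.const_mul_atTop hcpos')).const_mul_atTop
        (by positivity)
    have hzero : Tendsto (fun t : ℝ => (Real.log ε - Real.log t) / t) atTop (nhds 0) := by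
      have h1 : Tendsto (fun t : ℝ => Real.log ε / t) atTop (nhds 0) :=
        tendsto_const_nhds.div_atTop tendsto_id
      have h2 : Tendsto (fun t : ℝ => Real.log t / t) atTop (nhds 0) :=
        Real.isLittleO_log_id_atTop.tendsto_div_nhds_zero
      have := h1.sub h2
      rw [sub_zero] at this
      refine this.congr fun t => ?_
      rw [div_sub_div_same]
    filter_upwards [eventually_ge_atTop 1, he1.eventually_ge_atTop C₀,
      he2.eventually_ge_atTop C₁,
      hzero.eventually (eventually_ge_nhds (show -(δ/2) < 0 by linarith))] with t ht1 ht2 ht3 ht4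
    have htpos : (0:ℝ) < t := by linarith
    -- slope bound
    have hslope : (G t - G (t/2)) / (t - t/2) ≤ g t :=
      St7Aux.convex_slope_le_leftDeriv hGconv (by linarith)
    have hnum : ε/2 * Real.exp (θ' * t) ≤ G t - G (t/2) := by
      have hGt := hεG t (by linarith)
      have hGt2 : G (t/2) ≤ C₀ + C₁ * Real.exp (θ * (t/2)) := hub (t/2) (by linarith)
      have hc1 : C₁ * Real.exp (θ * (t/2)) ≤ ε/4 * Real.exp (θ' * t) := by
        have : C₁ * Real.exp (θ * (t/2)) ≤ (ε/4 * Real.exp ((θ' - θ/2) * t)) * Real.exp (θ * (t/2)) :=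
          mul_le_mul_of_nonneg_right ht3 (Real.exp_pos _).le
        calc C₁ * Real.exp (θ * (t/2)) ≤ (ε/4 * Real.exp ((θ' - θ/2) * t)) * Real.exp (θ * (t/2)) := this
          _ = ε/4 * Real.exp ((θ' - θ/2) * t + θ * (t/2)) := by rw [Real.exp_add]; ring
          _ = ε/4 * Real.exp (θ' * t) := by congr 1; ring
      linarith
    have hgt : ε * Real.exp (θ' * t) / t ≤ g t := by
      have hden : t - t/2 = t/2 := by ring
      rw [hden] at hslope
      have ht2pos : (0:ℝ) < t/2 := by linarith
      have h5 : ε/2 * Real.exp (θ' * t) / (t/2) ≤ (G t - G (t/2)) / (t/2) := by gcongr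
      have h6 : ε/2 * Real.exp (θ' * t) / (t/2) = ε * Real.exp (θ' * t) / t := by
        rw [div_eq_div_iff ht2pos.ne' htpos.ne']; ring
      linarith
    have hgpos : 0 < g t :=
      lt_of_lt_of_le (div_pos (by positivity) htpos) hgt
    refine ⟨?_, hgpos⟩
    have hlog : Real.log ε + θ' * t - Real.log t ≤ Real.log (g t) := by
      have h := Real.log_le_log (div_pos (by positivity) htpos) hgt
      rwa [Real.log_div (by positivity) htpos.ne', Real.log_mul hε.ne'
        (Real.exp_pos _).ne', Real.log_exp] at h
    calc θ - δ ≤ θ' - δ/2 := by linarith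
      _ ≤ θ' + (Real.log ε - Real.log t) / t := by linarith
      _ = (Real.log ε + θ' * t - Real.log t) / t := by
          rw [eq_div_iff htpos.ne', add_mul, div_mul_cancel₀ _ htpos.ne']; ring
      _ ≤ Real.log (g t) / t := by gcongr
  have hgpos : ∀ᶠ t in atTop, 0 < g t := (hglo 1 one_pos).mono fun t ht => ht.2
  have hghi : ∀ δ > (0:ℝ), ∀ᶠ t in atTop, Real.log (g t) / t ≤ θ + δ := by
    intro δ hδ
    filter_upwards [eventually_ge_atTop 1, hgpos,
      eventually_ge_atTop ((Real.log (C₀ + C₁) + θ) / δ)] with t ht1 htg ht2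
    have htpos : (0:ℝ) < t := by linarith
    have hgub : g t ≤ (C₀ + C₁) * Real.exp (θ * (t+1)) := by
      have hslope := St7Aux.convex_leftDeriv_le_slope hGconv (show t < t + 1 by linarith)
      have hden : t + 1 - t = 1 := by ring
      rw [hden, div_one] at hslope
      have h2 : G (t+1) ≤ C₀ + C₁ * Real.exp (θ * (t+1)) := hub (t+1) (by linarith)
      have h3 : 0 ≤ G t := hGnn t
      have h4 : (1:ℝ) ≤ Real.exp (θ * (t+1)) := Real.one_le_exp (by positivity)
      nlinarith
    have hlog : Real.log (g t) ≤ Real.log (C₀ + C₁) + θ * (t+1) := by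
      have h := Real.log_le_log htg hgub
      rwa [Real.log_mul (by positivity) (Real.exp_pos _).ne', Real.log_exp] at h
    calc Real.log (g t) / t ≤ (Real.log (C₀ + C₁) + θ * (t+1)) / t := by gcongr
      _ = θ + (Real.log (C₀ + C₁) + θ) / t := by
          rw [div_eq_iff htpos.ne', add_mul, div_mul_cancel₀ _ htpos.ne']; ring
      _ ≤ θ + δ := by
          have h3 : (Real.log (C₀ + C₁) + θ) / t ≤ δ := by
            rw [div_le_iff₀ htpos]
            calc Real.log (C₀ + C₁) + θ ≤ δ * ((Real.log (C₀ + C₁) + θ) / δ) := by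
                  rw [mul_div_cancel₀ _ hδ.ne']
              _ ≤ δ * t := by gcongr
          linarith
  have hglim : Tendsto (fun t => Real.log (g t) / t) atTop (nhds θ) :=
    St7Aux.tendsto_of_bounds _ _ (fun δ hδ => (hglo δ hδ).mono fun t ht => ht.1) hghi

  -- rewrite Iop through G
  have hIopEq : ∀ p > (0:ℝ), Iop ι β γ c α lam Ψ p = ((1 + β) * G (Real.log p)) ^ (-γ) := by
    intro p hp
    have hint_eq : (∫ i, lam i * max ((c i) ^ (α i)) ((Ψ i p) ^ (α i)) ∂ι)
        = G (Real.log p) :=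
      integral_congr_ae (ae_of_all _ fun i => by
        show lam i * max ((c i) ^ (α i)) ((Ψ i p) ^ (α i))
            = lam i * max ((c i) ^ (α i)) ((K i) ^ (α i) * Real.exp (s i * Real.log p))
        rw [hpoint i p hp])
    rw [Iop, hint_eq]
  -- left derivative of Iop
  have hld : ∀ p > (1:ℝ), leftDeriv (Iop ι β γ c α lam Ψ) p =
      (-γ * ((1 + β) * G (Real.log p)) ^ (-γ - 1) * (1 + β)) * (g (Real.log p) * p⁻¹) := by
    intro p hp1
    have hp : (0:ℝ) < p := lt_trans one_pos hp1
    have htpos : 0 < Real.log p := Real.log_pos hp1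
    have hX : 0 < (1 + β) * G (Real.log p) := mul_pos hβ1 (hGpos _ htpos.le)
    have hmaps : MapsTo Real.log (Ioo 0 p) (Iio (Real.log p)) := fun q hq =>
      mem_Iio.mpr (Real.log_lt_log hq.1 hq.2)
    have hinner : HasDerivWithinAt (fun q => G (Real.log q)) (g (Real.log p) * p⁻¹)
        (Ioo 0 p) p :=
      (hGleft (Real.log p)).comp p ((Real.hasDerivAt_log hp.ne').hasDerivWithinAt) hmaps
    have h1 : HasDerivAt (fun y : ℝ => (1 + β) * y) (1 + β) (G (Real.log p)) := by
      simpa using (hasDerivAt_id (G (Real.log p))).const_mul (1 + β)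
    have h2 : HasDerivAt (fun x : ℝ => x ^ (-γ))
        (-γ * ((1 + β) * G (Real.log p)) ^ (-γ - 1)) ((1 + β) * G (Real.log p)) :=
      Real.hasDerivAt_rpow_const (Or.inl hX.ne')
    have hout : HasDerivAt (fun y : ℝ => ((1 + β) * y) ^ (-γ))
        (-γ * ((1 + β) * G (Real.log p)) ^ (-γ - 1) * (1 + β)) (G (Real.log p)) :=
      h2.comp _ h1
    have hcomp := hout.comp_hasDerivWithinAt p hinner
    have hcomp' : HasDerivWithinAt (Iop ι β γ c α lam Ψ)
        ((-γ * ((1 + β) * G (Real.log p)) ^ (-γ - 1) * (1 + β)) * (g (Real.log p) * p⁻¹))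
        (Ioo 0 p) p := by
      refine hcomp.congr_of_eventuallyEq ?_ (hIopEq p hp)
      exact eventually_of_mem self_mem_nhdsWithin fun q hq => hIopEq q hq.1
    have hmem : Ioo 0 p ∈ nhdsWithin p (Iio p) := by
      have h : Iio p ∩ Ioi 0 ∈ nhdsWithin p (Iio p) :=
        inter_mem self_mem_nhdsWithin (mem_nhdsWithin_of_mem_nhds (Ioi_mem_nhds hp))
      rwa [Set.Iio_inter_Ioi] at h
    exact (hcomp'.mono_of_mem_nhdsWithin hmem).derivWithin (uniqueDiffWithinAt_Iio p)
  constructor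
  · -- first limit
    have h1 : Tendsto (fun t => (-γ) * (Real.log (1 + β) / t + Real.log (G t) / t)) atTop
        (nhds ((-γ) * (0 + θ))) :=
      ((tendsto_const_nhds.div_atTop tendsto_id).add hGlim).const_mul _
    have h2 := h1.comp Real.tendsto_log_atTop
    have heq : (-γ) * (0 + θ) = -(abar * (1 + β) * γ / (1 - abar)) := by
      rw [hθ]; field_simp; ring
    rw [heq] at h2
    refine Tendsto.congr' ?_ h2
    filter_upwards [eventually_gt_atTop 1] with p hp1
    have hp : (0:ℝ) < p := lt_trans one_pos hp1
    have htpos : 0 < Real.log p := Real.log_pos hp1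
    have hGp := hGpos _ htpos.le
    show (-γ) * (Real.log (1 + β) / Real.log p + Real.log (G (Real.log p)) / Real.log p)
        = Real.log (Iop ι β γ c α lam Ψ p) / Real.log p
    rw [hIopEq p hp, Real.log_rpow (mul_pos hβ1 hGp), Real.log_mul hβ1.ne' hGp.ne',
      ← add_div]
    ring
  · -- second limit
    have h1 : Tendsto (fun t => (Real.log γ + Real.log (1 + β)) / t
        + (-γ - 1) * (Real.log (1 + β) / t + Real.log (G t) / t) + Real.log (g t) / t - 1)
        atTop (nhds (0 + (-γ - 1) * (0 + θ) + θ - 1)) :=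
      (((tendsto_const_nhds.div_atTop tendsto_id).add
        (((tendsto_const_nhds.div_atTop tendsto_id).add hGlim).const_mul _)).add
        hglim).sub tendsto_const_nhds
    have h2 := h1.comp Real.tendsto_log_atTop
    have heq : 0 + (-γ - 1) * (0 + θ) + θ - 1 = -(abar * (1 + β) * γ / (1 - abar)) - 1 := by
      rw [hθ]; field_simp; ring
    rw [heq] at h2
    refine Tendsto.congr' ?_ h2
    filter_upwards [eventually_gt_atTop 1,
      Real.tendsto_log_atTop.eventually hgpos] with p hp1 hgp
    have hp : (0:ℝ) < p := lt_trans one_pos hp1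
    have htpos : 0 < Real.log p := Real.log_pos hp1
    have hGp := hGpos _ htpos.le
    have hX : 0 < (1 + β) * G (Real.log p) := mul_pos hβ1 hGp
    have hXp : 0 < ((1 + β) * G (Real.log p)) ^ (-γ - 1) := Real.rpow_pos_of_pos hX _
    show (Real.log γ + Real.log (1 + β)) / Real.log p
        + (-γ - 1) * (Real.log (1 + β) / Real.log p + Real.log (G (Real.log p)) / Real.log p)
        + Real.log (g (Real.log p)) / Real.log p - 1
        = Real.log (-(leftDeriv (Iop ι β γ c α lam Ψ) p)) / Real.log p
    rw [hld p hp1]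
    have hneg : -((-γ * ((1 + β) * G (Real.log p)) ^ (-γ - 1) * (1 + β)) *
        (g (Real.log p) * p⁻¹))
        = γ * ((1 + β) * G (Real.log p)) ^ (-γ - 1) * (1 + β) * (g (Real.log p) * p⁻¹) := by
      ring
    rw [hneg]
    have hA : γ * ((1 + β) * G (Real.log p)) ^ (-γ - 1) * (1 + β) ≠ 0 :=
      (mul_pos (mul_pos hγ0 hXp) hβ1).ne'
    have hB : g (Real.log p) * p⁻¹ ≠ 0 := (mul_pos hgp (inv_pos.mpr hp)).ne'
    rw [Real.log_mul hA hB, Real.log_mul (mul_pos hγ0 hXp).ne' hβ1.ne',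
      Real.log_mul hγ0.ne' hXp.ne', Real.log_mul hgp.ne' (inv_pos.mpr hp).ne',
      Real.log_rpow hX, Real.log_mul hβ1.ne' hGp.ne', Real.log_inv]
    have hlp : Real.log p ≠ 0 := htpos.ne'
    field_simp
    ring
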